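/- Let E be a Banach lattice and let f, g be elements of the positive cone of E. Then f belongs to the closure of the principal ideal generated by g if and only if the net f ∧ (t·g) converges in norm to f as t → ∞. -/

import Mathlib

open Filter

/-- The principal ideal generated by `u` in a Banach lattice. -/
def principalIdeal {E : Type*} [NormedAddCommGroup E] [Lattice E] [HasSolidNorm E]
    [IsOrderedAddMonoid E] [NormedSpace ℝ E]
    (u : E) : Set E :=
  {x | ∃ c : ℝ, 0 ≤ c ∧ |x| ≤ c • u}

/-- Nonnegative real scalar times a positive element is positive, even without an
`OrderedSMul` assumption: use dyadic rationals and the closedness of the positive cone. -/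
lemma smul_nonneg_of_nonneg {E : Type*} [NormedAddCommGroup E] [Lattice E] [HasSolidNorm E]
    [IsOrderedAddMonoid E] [NormedSpace ℝ E]
    {g : E} (hg : 0 ≤ g) {t : ℝ} (ht : 0 ≤ t) : 0 ≤ t • g := by
  -- dyadic fractions of `g` are nonnegative
  have hdy : ∀ k : ℕ, 0 ≤ ((2 : ℝ) ^ k)⁻¹ • g := by
    intro k
    induction k with
    | zero => simpa using hg
    | succ k ih =>
      apply nsmul_two_semiclosed
      have h2 : (2 : ℕ) • (((2 : ℝ) ^ (k + 1))⁻¹ • g) = ((2 : ℝ) ^ k)⁻¹ • g := by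
        rw [← Nat.cast_smul_eq_nsmul ℝ, smul_smul]
        norm_num [pow_succ, mul_comm, mul_inv]
        rw [← mul_assoc]
        norm_num
      rw [h2]; exact ih
  have hrat : ∀ n k : ℕ, 0 ≤ ((n : ℝ) / 2 ^ k) • g := by
    intro n k
    rw [div_eq_mul_inv, ← smul_smul, Nat.cast_smul_eq_nsmul]
    exact nsmul_nonneg (hdy k) n
  -- approximate `t` by dyadic rationals from below
  set a : ℕ → ℝ := fun k => (⌊2 ^ k * t⌋₊ : ℝ) / 2 ^ k with ha
  have hle : ∀ k, a k ≤ t := by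
    intro k
    rw [ha, div_le_iff₀ (by positivity)]
    rw [mul_comm t (2 ^ k)]
    exact Nat.floor_le (by positivity)
  have hge : ∀ k, t - ((2 : ℝ)⁻¹) ^ k ≤ a k := by
    intro k
    rw [ha, le_div_iff₀ (by positivity), sub_mul, inv_pow, inv_mul_cancel₀ (by positivity)]
    have := Nat.sub_one_lt_floor ((2 : ℝ) ^ k * t)
    nlinarith [this]
  have hta : Tendsto a atTop (nhds t) := by
    have hlo : Tendsto (fun k : ℕ => t - ((2 : ℝ)⁻¹) ^ k) atTop (nhds t) := by
      have := tendsto_pow_atTop_nhds_zero_of_lt_one (r := (2 : ℝ)⁻¹) (by norm_num) (by norm_num)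
      simpa using (tendsto_const_nhds (x := t)).sub this
    exact tendsto_of_tendsto_of_tendsto_of_le_of_le hlo tendsto_const_nhds hge hle
  have htend : Tendsto (fun k => a k • g) atTop (nhds (t • g)) := hta.smul_const g
  exact isClosed_nonneg.mem_of_tendsto htend (Eventually.of_forall fun k => hrat _ k)

/-- For positive elements `f, g` of a Banach lattice, `f` belongs to the closure of the
principal ideal generated by `g` if and only if `f ⊓ (t • g) → f` in norm as `t → ∞`. -/
theorem mem_closure_principalIdeal_iff_tendsto
    {E : Type*} [NormedAddCommGroup E] [Lattice E] [HasSolidNorm E]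
    [IsOrderedAddMonoid E] [NormedSpace ℝ E] [CompleteSpace E]
    (f g : E) (hf : 0 ≤ f) (hg : 0 ≤ g) :
    f ∈ closure (principalIdeal g) ↔
      Tendsto (fun t : ℝ => f ⊓ (t • g)) atTop (nhds f) := by
  constructor
  · intro hmem
    rw [Metric.tendsto_atTop]
    intro ε hε
    obtain ⟨x, hx, hdist⟩ := Metric.mem_closure_iff.mp hmem ε hε
    obtain ⟨c, hc, hxc⟩ := hx
    refine ⟨c, fun t ht => ?_⟩
    have hcg : c • g ≤ t • g := by
      have : 0 ≤ (t - c) • g := smul_nonneg_of_nonneg hg (by linarith)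
      rw [sub_smul, sub_nonneg] at this
      exact this
    have hxg : x ⊔ 0 ≤ t • g := (sup_le (le_abs_self x) (abs_nonneg x)).trans (hxc.trans hcg)
    have hkey : |f - f ⊓ (t • g)| ≤ |f - x| := by
      have h0 : 0 ≤ f - f ⊓ (t • g) := sub_nonneg.mpr inf_le_left
      rw [abs_of_nonneg h0, sub_inf]
      have h1 : (f - f) ⊔ (f - t • g) ≤ (f - f) ⊔ (f - x ⊔ 0) :=
        sup_le_sup_left (sub_le_sub_left hxg f) _
      refine h1.trans ?_
      have h2 : (f - f) ⊔ (f - x ⊔ 0) ≤ |f - x ⊔ 0| := by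
        rw [sub_self]
        exact sup_le (abs_nonneg _) (le_abs_self _)
      refine h2.trans ?_
      have h3 : f - x ⊔ 0 = f ⊔ 0 - x ⊔ 0 := by rw [sup_of_le_left hf]
      rw [h3]
      exact abs_sup_sub_sup_le_abs f x 0
    have hnorm : ‖f - f ⊓ (t • g)‖ ≤ ‖f - x‖ :=
      HasSolidNorm.solid (by simpa [abs_abs] using hkey)
    rw [dist_eq_norm, ← norm_neg]
    simp only [neg_sub]
    calc ‖f - f ⊓ (t • g)‖ ≤ ‖f - x‖ := hnorm
      _ < ε := by rw [← dist_eq_norm]; exact hdist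
  · intro htend
    have hev : ∀ᶠ t : ℝ in atTop, f ⊓ (t • g) ∈ principalIdeal g := by
      filter_upwards [eventually_ge_atTop (0 : ℝ)] with t ht
      exact ⟨t, ht, by
        rw [abs_of_nonneg (le_inf hf (smul_nonneg_of_nonneg hg ht))]
        exact inf_le_right⟩
    exact mem_closure_of_tendsto htend hev
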